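/- For the full shift Σ_r on r symbols with the shift map σ and the uniform system of coefficients c_S^n = 2^{−n}, the topological average sample complexity with respect to the time-zero cover is Asc(Σ_r,𝒰₀,σ) = (log r)/2, and the topological intricacy is Int(Σ_r,𝒰₀,σ) = 0. -/

import Mathlib

open Set Filter Topology

/-- Minimal cardinality of a subcover of a family of sets covering `X`. -/
noncomputable def coverNum {X : Type*} (𝒰 : Set (Set X)) : ℕ :=
  sInf {m | ∃ F : Finset (Set X), ↑F ⊆ 𝒰 ∧ F.card = m ∧ ⋃₀ (F : Set (Set X)) = Set.univ}

/-- The join `⋁_{i ∈ S} T^{-i} 𝒰` of preimages of a cover along a set of times `S ⊆ n*`. -/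
def joinCover {X : Type*} (T : X → X) (𝒰 : Set (Set X)) {n : ℕ} (S : Finset (Fin n)) :
    Set (Set X) :=
  {V | ∃ f : Fin n → Set X, (∀ i, f i ∈ 𝒰) ∧ V = ⋂ i ∈ S, (T^[(i : ℕ)]) ⁻¹' f i}

/-- The shift map on the full shift `Σ_r = {0,…,r-1}^ℤ`. -/
def fullShift (r : ℕ) : (ℤ → Fin r) → (ℤ → Fin r) := fun x i => x (i + 1)

/-- The time-zero cover (and partition) of the full shift by the cylinder sets `{x : x₀ = a}`. -/
def fullTimeZeroCover (r : ℕ) : Set (Set (ℤ → Fin r)) :=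
  Set.range fun a : Fin r => {x : ℤ → Fin r | x 0 = a}

lemma fullShift_iterate (r k : ℕ) (x : ℤ → Fin r) (i : ℤ) :
    (fullShift r)^[k] x i = x (i + k) := by
  induction k generalizing i with
  | zero => simp
  | succ k ih =>
    rw [Function.iterate_succ_apply']
    show ((fullShift r)^[k] x) (i + 1) = x (i + (k + 1 : ℕ))
    rw [ih]
    congr 1
    push_cast
    ring

/-- Cylinder set determined by the coordinates in `S`. -/
def cyl (r n : ℕ) (S : Finset (Fin n)) (a : Fin n → Fin r) : Set (ℤ → Fin r) :=
  {x | ∀ i ∈ S, x ((i : ℕ) : ℤ) = a i}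

lemma mem_joinCover_iff (r n : ℕ) (S : Finset (Fin n)) (V : Set (ℤ → Fin r)) :
    V ∈ joinCover (fullShift r) (fullTimeZeroCover r) S ↔
      ∃ a : Fin n → Fin r, V = cyl r n S a := by
  constructor
  · rintro ⟨f, hf, rfl⟩
    choose a ha using fun i => hf i
    refine ⟨a, ?_⟩
    ext x
    simp only [cyl, Set.mem_iInter, Set.mem_setOf_eq, Set.mem_preimage]
    refine forall₂_congr fun i hi => ?_
    rw [← ha i]
    simp [Set.mem_setOf_eq, fullShift_iterate]
  · rintro ⟨a, rfl⟩
    refine ⟨fun i => {x | x 0 = a i}, fun i => ⟨a i, rfl⟩, ?_⟩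
    ext x
    simp [cyl, fullShift_iterate]

/-- A point realizing prescribed coordinates on `{0,…,n-1}`. -/
def pt (r n : ℕ) (hr : 1 ≤ r) (a : Fin n → Fin r) : ℤ → Fin r :=
  fun k => if h : 0 ≤ k ∧ k < n then a ⟨k.toNat, by omega⟩ else ⟨0, hr⟩

lemma pt_apply (r n : ℕ) (hr : 1 ≤ r) (a : Fin n → Fin r) (i : Fin n) :
    pt r n hr a ((i : ℕ) : ℤ) = a i := by
  have h : (0 : ℤ) ≤ ((i : ℕ) : ℤ) ∧ ((i : ℕ) : ℤ) < n :=
    ⟨Int.natCast_nonneg _, by exact_mod_cast i.isLt⟩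
  simp [pt, h]

lemma coverNum_joinCover (r : ℕ) (hr : 1 ≤ r) {n : ℕ} (S : Finset (Fin n)) :
    coverNum (joinCover (fullShift r) (fullTimeZeroCover r) S) = r ^ S.card := by
  classical
  set 𝒰 := joinCover (fullShift r) (fullTimeZeroCover r) S with h𝒰
  let ext2 : ({i // i ∈ S} → Fin r) → (Fin n → Fin r) :=
    fun g i => if h : i ∈ S then g ⟨i, h⟩ else ⟨0, hr⟩
  have hext : ∀ g (i : Fin n) (hi : i ∈ S), ext2 g i = g ⟨i, hi⟩ := fun g i hi => dif_pos hi
  have hcard : Fintype.card ({i // i ∈ S} → Fin r) = r ^ S.card := by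
    rw [Fintype.card_fun, Fintype.card_fin, Fintype.card_coe]
  have hmem : r ^ S.card ∈ {m | ∃ F : Finset (Set (ℤ → Fin r)),
      ↑F ⊆ 𝒰 ∧ F.card = m ∧ ⋃₀ (F : Set (Set (ℤ → Fin r))) = Set.univ} := by
    refine ⟨Finset.image (fun g => cyl r n S (ext2 g)) Finset.univ, ?_, ?_, ?_⟩
    · intro V hV
      simp only [Finset.coe_image, Set.mem_image, Finset.coe_univ] at hV
      obtain ⟨g, -, rfl⟩ := hV
      exact (mem_joinCover_iff r n S _).2 ⟨ext2 g, rfl⟩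
    · rw [Finset.card_image_of_injective _ ?_, Finset.card_univ, hcard]
      intro g g' h
      have h' : cyl r n S (ext2 g) = cyl r n S (ext2 g') := h
      have hp : pt r n hr (ext2 g) ∈ cyl r n S (ext2 g) := fun i hi => pt_apply r n hr _ i
      rw [h'] at hp
      funext j
      obtain ⟨j, hj⟩ := j
      have h1 := hp j hj
      rw [pt_apply, hext _ _ hj, hext _ _ hj] at h1
      exact h1
    · ext x
      simp only [Set.mem_univ, iff_true]
      have hx : x ∈ cyl r n S (ext2 (fun j => x ((j.1 : ℕ) : ℤ))) := fun i hi =>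
        (hext (fun j => x ((j.1 : ℕ) : ℤ)) i hi).symm
      exact Set.mem_sUnion.2 ⟨cyl r n S (ext2 (fun j => x ((j.1 : ℕ) : ℤ))), Finset.mem_coe.2
        (Finset.mem_image_of_mem _ (Finset.mem_univ (fun j : {i // i ∈ S} => x ((j.1 : ℕ) : ℤ)))), hx⟩
  have hlb : ∀ m ∈ {m | ∃ F : Finset (Set (ℤ → Fin r)),
      ↑F ⊆ 𝒰 ∧ F.card = m ∧ ⋃₀ (F : Set (Set (ℤ → Fin r))) = Set.univ},
      r ^ S.card ≤ m := by
    rintro m ⟨F, hF𝒰, rfl, hFcov⟩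
    have hpt : ∀ g : {i // i ∈ S} → Fin r, ∃ V ∈ F, pt r n hr (ext2 g) ∈ V := by
      intro g
      have : pt r n hr (ext2 g) ∈ ⋃₀ (F : Set (Set (ℤ → Fin r))) := by
        rw [hFcov]; exact Set.mem_univ _
      obtain ⟨V, hV, hxV⟩ := this
      exact ⟨V, hV, hxV⟩
    choose ψ hψF hψmem using hpt
    have hinj : Function.Injective ψ := by
      intro g g' h
      obtain ⟨a, ha⟩ := (mem_joinCover_iff r n S _).1 (hF𝒰 (hψF g))
      have h1 : pt r n hr (ext2 g) ∈ cyl r n S a := by rw [← ha]; exact hψmem g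
      have h2 : pt r n hr (ext2 g') ∈ cyl r n S a := by
        rw [← ha, h]; exact hψmem g'
      funext j
      obtain ⟨j, hj⟩ := j
      have e1 := h1 j hj
      have e2 := h2 j hj
      rw [pt_apply, hext _ _ hj] at e1
      rw [pt_apply, hext _ _ hj] at e2
      rw [e1, e2]
    calc r ^ S.card = Fintype.card ({i // i ∈ S} → Fin r) := hcard.symm
      _ = (Finset.univ : Finset ({i // i ∈ S} → Fin r)).card := Finset.card_univ.symm
      _ ≤ F.card := Finset.card_le_card_of_injOn ψ (fun g _ => hψF g) hinj.injOn
  have hne : {m | ∃ F : Finset (Set (ℤ → Fin r)),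
      ↑F ⊆ 𝒰 ∧ F.card = m ∧ ⋃₀ (F : Set (Set (ℤ → Fin r))) = Set.univ}.Nonempty :=
    ⟨_, hmem⟩
  exact le_antisymm (Nat.sInf_le hmem) (hlb _ (Nat.sInf_mem hne))

lemma sum_card_finset (n : ℕ) :
    ∑ S : Finset (Fin n), ((S.card : ℝ)) = n * 2 ^ n / 2 := by
  classical
  let e : Finset (Fin n) ≃ Finset (Fin n) :=
    ⟨compl, compl, compl_compl, compl_compl⟩
  have h1 : ∑ S : Finset (Fin n), ((Sᶜ.card : ℝ)) = ∑ S : Finset (Fin n), ((S.card : ℝ)) :=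
    e.sum_comp (fun S => (S.card : ℝ))
  have h2 : ∑ S : Finset (Fin n), (((S.card : ℝ)) + ((Sᶜ.card : ℝ))) = n * 2 ^ n := by
    have : ∀ S : Finset (Fin n), ((S.card : ℝ)) + ((Sᶜ.card : ℝ)) = n := by
      intro S
      have := Finset.card_add_card_compl S
      rw [Fintype.card_fin] at this
      exact_mod_cast this
    rw [Finset.sum_congr rfl (fun S _ => this S), Finset.sum_const, Finset.card_univ,
      Fintype.card_finset, Fintype.card_fin]
    ring
  rw [Finset.sum_add_distrib, h1] at h2
  linarith

theorem asc_and_int_of_full_shift (r : ℕ) (hr : 1 ≤ r) :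
    Tendsto (fun n : ℕ =>
        (1 / (n : ℝ)) * ∑ S : Finset (Fin n), (1 / 2 ^ n : ℝ) *
          Real.log (coverNum (joinCover (fullShift r) (fullTimeZeroCover r) S)))
      atTop (𝓝 (Real.log r / 2)) ∧
    Tendsto (fun n : ℕ =>
        (1 / (n : ℝ)) * ∑ S : Finset (Fin n), (1 / 2 ^ n : ℝ) *
          Real.log (((coverNum (joinCover (fullShift r) (fullTimeZeroCover r) S) : ℝ) *
              (coverNum (joinCover (fullShift r) (fullTimeZeroCover r) Sᶜ) : ℝ)) /
            (coverNum (joinCover (fullShift r) (fullTimeZeroCover r)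
              (Finset.univ : Finset (Fin n))) : ℝ)))
      atTop (𝓝 0) := by
  have hrR : (0 : ℝ) < (r : ℝ) := by exact_mod_cast hr
  constructor
  · have key : ∀ n : ℕ, 1 ≤ n → (1 / (n : ℝ)) * ∑ S : Finset (Fin n), (1 / 2 ^ n : ℝ) *
        Real.log (coverNum (joinCover (fullShift r) (fullTimeZeroCover r) S))
        = Real.log r / 2 := by
      intro n hn
      have hterm : ∀ S : Finset (Fin n),
          (1 / 2 ^ n : ℝ) * Real.log (coverNum (joinCover (fullShift r) (fullTimeZeroCover r) S))
          = (1 / 2 ^ n : ℝ) * ((S.card : ℝ) * Real.log r) := by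
        intro S
        rw [coverNum_joinCover r hr S]
        rw [Nat.cast_pow, Real.log_pow]
      rw [Finset.sum_congr rfl (fun S _ => hterm S), ← Finset.mul_sum]
      have : ∑ S : Finset (Fin n), ((S.card : ℝ) * Real.log r)
          = (n * 2 ^ n / 2) * Real.log r := by
        rw [← Finset.sum_mul, sum_card_finset]
      rw [this]
      have hn0 : (n : ℝ) ≠ 0 := by positivity
      have h2 : (2 : ℝ) ^ n ≠ 0 := by positivity
      field_simp
    have : (fun _ : ℕ => Real.log r / 2) =ᶠ[atTop]
        (fun n : ℕ => (1 / (n : ℝ)) * ∑ S : Finset (Fin n), (1 / 2 ^ n : ℝ) *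
          Real.log (coverNum (joinCover (fullShift r) (fullTimeZeroCover r) S))) :=
      eventually_atTop.2 ⟨1, fun n hn => (key n hn).symm⟩
    exact tendsto_const_nhds.congr' this
  · have key : ∀ n : ℕ, (1 / (n : ℝ)) * ∑ S : Finset (Fin n), (1 / 2 ^ n : ℝ) *
        Real.log (((coverNum (joinCover (fullShift r) (fullTimeZeroCover r) S) : ℝ) *
            (coverNum (joinCover (fullShift r) (fullTimeZeroCover r) Sᶜ) : ℝ)) /
          (coverNum (joinCover (fullShift r) (fullTimeZeroCover r)
            (Finset.univ : Finset (Fin n))) : ℝ)) = 0 := by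
      intro n
      have hterm : ∀ S : Finset (Fin n),
          (((coverNum (joinCover (fullShift r) (fullTimeZeroCover r) S) : ℝ) *
            (coverNum (joinCover (fullShift r) (fullTimeZeroCover r) Sᶜ) : ℝ)) /
          (coverNum (joinCover (fullShift r) (fullTimeZeroCover r)
            (Finset.univ : Finset (Fin n))) : ℝ)) = 1 := by
        intro S
        rw [coverNum_joinCover r hr S, coverNum_joinCover r hr Sᶜ,
          coverNum_joinCover r hr (Finset.univ : Finset (Fin n))]
        have hcards : S.card + Sᶜ.card = n := by
          have := Finset.card_add_card_compl S
          rwa [Fintype.card_fin] at this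
        have huniv : (Finset.univ : Finset (Fin n)).card = n := by
          rw [Finset.card_univ, Fintype.card_fin]
        push_cast
        rw [huniv, ← pow_add, hcards]
        exact div_self (by positivity)
      simp only [hterm, Real.log_one, mul_zero, Finset.sum_const_zero]
    have : (fun _ : ℕ => (0 : ℝ)) =ᶠ[atTop] _ := Eventually.of_forall (fun n => (key n).symm)
    exact tendsto_const_nhds.congr' this
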